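/- Let (X, ↪, P) be a primal-proximity space and A, B ⊆ X. If B ̸↪ A, then B ̸↪ A^↪, where A^↪ := {x ∈ X : {x} ↪ A}. -/
import Mathlib


open Set

/-- A collection `P` of subsets of `X` is a *primal* on `X`. -/
def IsPrimalOn {X : Type*} (P : Set (Set X)) : Prop :=
  (Set.univ : Set X) ∉ P ∧
  (∀ A B : Set X, A ∈ P → B ⊆ A → B ∈ P) ∧
  (∀ A B : Set X, A ∩ B ∈ P → A ∈ P ∨ B ∈ P)

/-- A binary relation `r` on the power set of `X` is a *primal-proximity* with
respect to a primal `P` on `X`. -/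
def IsPrimalProximity {X : Type*} (P : Set (Set X)) (r : Set X → Set X → Prop) : Prop :=
  (∀ A B : Set X, r A B → r B A) ∧
  (∀ A B C : Set X, r A (B ∪ C) ↔ (r A B ∨ r A C)) ∧
  (∀ A : Set X, Aᶜ ∉ P → ∀ B : Set X, ¬ r A B) ∧
  (∀ A B : Set X, (A ∩ B)ᶜ ∈ P → r A B) ∧
  (∀ A B : Set X, ¬ r A B →
    ∃ C D : Set X, ¬ r A Cᶜ ∧ ¬ r Dᶜ B ∧ (C ∩ D)ᶜ ∉ P)

/-- The point-primal proximity of `A`: `A^↪ = {x | {x} ↪ A}`. -/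
def ppp {X : Type*} (r : Set X → Set X → Prop) (A : Set X) : Set X :=
  {x : X | r {x} A}

theorem stmt_5 {X : Type*} [Nonempty X] (P : Set (Set X)) (r : Set X → Set X → Prop)
    (hP : IsPrimalOn P) (hr : IsPrimalProximity P r)
    (A B : Set X) (h : ¬ r B A) :
    ¬ r B (ppp r A) := by
  obtain ⟨hsym, hun, hnp, hip, hstr⟩ := hr
  have mono : ∀ A B C : Set X, B ⊆ C → r A B → r A C := by
    intro A B C hBC hAB
    have : r A (B ∪ C) := (hun A B C).mpr (Or.inl hAB)
    rwa [Set.union_eq_self_of_subset_left hBC] at this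
  obtain ⟨C, D, hBC, hDA, hCD⟩ := hstr B A h
  intro hcon
  apply hBC
  apply mono B (ppp r A) Cᶜ _ hcon
  intro x hx
  by_contra hxC
  simp only [Set.mem_compl_iff, not_not] at hxC
  have hxA : r {x} A := hx
  by_cases hxD : x ∈ D
  · have hxc : ({x} : Set X)ᶜ ∉ P := by
      intro hmem
      exact hCD (hP.2.1 _ _ hmem (Set.compl_subset_compl.mpr
        (Set.singleton_subset_iff.mpr ⟨hxC, hxD⟩)))
    exact hnp {x} hxc A hxA
  · exact hDA (hsym A Dᶜ (mono A {x} Dᶜ (Set.singleton_subset_iff.mpr hxD)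
      (hsym {x} A hxA)))
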